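/- Let θ > 0, θ ≠ 1, x, y > 0, and let p₀, p₁, p₂ ≥ 0 with p₀ + p₁ + p₂ = 1. With pᵗ(s) defined as the normalized vectors proportional to (x²p₀, θy²p₁, θ²p₂) for t = 0, (θx²p₀, y²p₁, θp₂) for t = 1, and (θ²x²p₀, θy²p₁, p₂) for t = 2, one has max over i, j, k ∈ {0, 1, 2} of |pⁱ(k) − pʲ(k)| = max{ |p⁰(0) − p²(0)|, |p²(2) − p⁰(2)| }. -/

import Mathlib

private lemma pos3 {u v w p q r : ℝ} (hu : 0 < u) (hv : 0 < v) (hw : 0 < w)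
    (hp : 0 ≤ p) (hq : 0 ≤ q) (hr : 0 ≤ r) (h : 0 < p + q + r) :
    0 < u * p + v * q + w * r := by
  rcases hp.lt_or_eq with h0 | h0
  · nlinarith [mul_pos hu h0, mul_nonneg hv.le hq, mul_nonneg hw.le hr]
  · rcases hq.lt_or_eq with h1 | h1
    · nlinarith [mul_pos hv h1, mul_nonneg hu.le hp, mul_nonneg hw.le hr]
    · have h2 : 0 < r := by linarith
      nlinarith [mul_pos hw h2, mul_nonneg hu.le hp, mul_nonneg hv.le hq]

set_option maxHeartbeats 1000000 in
/-- For `θ > 0`, `θ ≠ 1`, the maximum over `i, j, k` of `|pⁱ(k) - pʲ(k)|`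
equals `max {|p⁰(0) - p²(0)|, |p²(2) - p⁰(2)|}`, where `pᵗ` is the normalization of
`(x²p₀, θy²p₁, θ²p₂)`, `(θx²p₀, y²p₁, θp₂)`, `(θ²x²p₀, θy²p₁, p₂)` for `t = 0, 1, 2`. -/
theorem sos_max_disagreement
    (θ x y p₀ p₁ p₂ : ℝ) (hθ0 : 0 < θ) (hθ1 : θ ≠ 1) (hx : 0 < x) (hy : 0 < y)
    (hp₀ : 0 ≤ p₀) (hp₁ : 0 ≤ p₁) (hp₂ : 0 ≤ p₂) (hsum : p₀ + p₁ + p₂ = 1) :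
    let D₀ : ℝ := x ^ 2 * p₀ + θ * y ^ 2 * p₁ + θ ^ 2 * p₂
    let D₁ : ℝ := θ * x ^ 2 * p₀ + y ^ 2 * p₁ + θ * p₂
    let D₂ : ℝ := θ ^ 2 * x ^ 2 * p₀ + θ * y ^ 2 * p₁ + p₂
    let q : Fin 3 → Fin 3 → ℝ :=
      ![![x ^ 2 * p₀ / D₀, θ * y ^ 2 * p₁ / D₀, θ ^ 2 * p₂ / D₀],
        ![θ * x ^ 2 * p₀ / D₁, y ^ 2 * p₁ / D₁, θ * p₂ / D₁],
        ![θ ^ 2 * x ^ 2 * p₀ / D₂, θ * y ^ 2 * p₁ / D₂, p₂ / D₂]]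
    (Finset.univ : Finset (Fin 3 × Fin 3 × Fin 3)).sup' Finset.univ_nonempty
        (fun w => |q w.1 w.2.2 - q w.2.1 w.2.2|) =
      max |q 0 0 - q 2 0| |q 2 2 - q 0 2| := by
  intro D₀ D₁ D₂ q
  have hD₀def : D₀ = x ^ 2 * p₀ + θ * y ^ 2 * p₁ + θ ^ 2 * p₂ := rfl
  have hD₁def : D₁ = θ * x ^ 2 * p₀ + y ^ 2 * p₁ + θ * p₂ := rfl
  have hD₂def : D₂ = θ ^ 2 * x ^ 2 * p₀ + θ * y ^ 2 * p₁ + p₂ := rfl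
  have hD₀ : 0 < D₀ := by
    rw [hD₀def]; exact pos3 (by positivity) (by positivity) (by positivity) hp₀ hp₁ hp₂ (by linarith)
  have hD₁ : 0 < D₁ := by
    rw [hD₁def]; exact pos3 (by positivity) (by positivity) (by positivity) hp₀ hp₁ hp₂ (by linarith)
  have hD₂ : 0 < D₂ := by
    rw [hD₂def, show (θ ^ 2 * x ^ 2 * p₀ + θ * y ^ 2 * p₁ + p₂ : ℝ)
      = θ ^ 2 * x ^ 2 * p₀ + θ * y ^ 2 * p₁ + 1 * p₂ by ring]
    exact pos3 (by positivity) (by positivity) one_pos hp₀ hp₁ hp₂ (by linarith)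
  -- row sums
  have r0 : q 0 0 + q 0 1 + q 0 2 = 1 := by
    show x ^ 2 * p₀ / D₀ + θ * y ^ 2 * p₁ / D₀ + θ ^ 2 * p₂ / D₀ = 1
    rw [← add_div, ← add_div]
    exact div_self hD₀.ne'
  have r1 : q 1 0 + q 1 1 + q 1 2 = 1 := by
    show θ * x ^ 2 * p₀ / D₁ + y ^ 2 * p₁ / D₁ + θ * p₂ / D₁ = 1
    rw [← add_div, ← add_div]
    exact div_self hD₁.ne'
  have r2 : q 2 0 + q 2 1 + q 2 2 = 1 := by
    show θ ^ 2 * x ^ 2 * p₀ / D₂ + θ * y ^ 2 * p₁ / D₂ + p₂ / D₂ = 1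
    rw [← add_div, ← add_div]
    exact div_self hD₂.ne'
  rcases lt_or_gt_of_ne hθ1 with hθ | hθ
  · -- θ < 1
    have hs : 0 ≤ 1 - θ ^ 2 := by nlinarith
    have t1 : 0 ≤ x ^ 2 * p₀ * (y ^ 2 * p₁) * (1 - θ ^ 2) := by positivity
    have t2 : 0 ≤ x ^ 2 * p₀ * p₂ * (1 - θ ^ 2) := by positivity
    have t3 : 0 ≤ y ^ 2 * p₁ * p₂ * (1 - θ ^ 2) := by positivity
    have hu1 : q 1 0 ≤ q 0 0 := by
      show θ * x ^ 2 * p₀ / D₁ ≤ x ^ 2 * p₀ / D₀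
      rw [div_le_div_iff₀ hD₁ hD₀, hD₀def, hD₁def]
      nlinarith [t1, mul_nonneg hθ0.le t2]
    have hu2 : q 2 0 ≤ q 1 0 := by
      show θ ^ 2 * x ^ 2 * p₀ / D₂ ≤ θ * x ^ 2 * p₀ / D₁
      rw [div_le_div_iff₀ hD₂ hD₁, hD₁def, hD₂def]
      nlinarith [mul_nonneg hθ0.le t2]
    have hv1 : q 0 2 ≤ q 1 2 := by
      show θ ^ 2 * p₂ / D₀ ≤ θ * p₂ / D₁
      rw [div_le_div_iff₀ hD₀ hD₁, hD₀def, hD₁def]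
      nlinarith [mul_nonneg hθ0.le t2]
    have hv2 : q 1 2 ≤ q 2 2 := by
      show θ * p₂ / D₁ ≤ p₂ / D₂
      rw [div_le_div_iff₀ hD₁ hD₂, hD₁def, hD₂def]
      nlinarith [mul_nonneg hθ0.le t2, t3]
    have hA : |q 0 0 - q 2 0| = q 0 0 - q 2 0 := abs_of_nonneg (by linarith)
    have hC : |q 2 2 - q 0 2| = q 2 2 - q 0 2 := abs_of_nonneg (by linarith)
    rw [hA, hC]
    have hMA : q 0 0 - q 2 0 ≤ max (q 0 0 - q 2 0) (q 2 2 - q 0 2) := le_max_left _ _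
    have hMC : q 2 2 - q 0 2 ≤ max (q 0 0 - q 2 0) (q 2 2 - q 0 2) := le_max_right _ _
    refine le_antisymm (Finset.sup'_le _ _ ?_) (max_le ?_ ?_)
    · rintro ⟨i, j, k⟩ -
      fin_cases i <;> fin_cases j <;> fin_cases k <;>
        (simp only [Fin.mk_zero, Fin.mk_one, Fin.reduceFinMk]
         rw [abs_sub_le_iff]; constructor <;> linarith)
    · calc q 0 0 - q 2 0 = |q 0 0 - q 2 0| := hA.symm
        _ ≤ _ := Finset.le_sup' (fun w : Fin 3 × Fin 3 × Fin 3 => |q w.1 w.2.2 - q w.2.1 w.2.2|)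
            (Finset.mem_univ ((0 : Fin 3), (2 : Fin 3), (0 : Fin 3)))
    · calc q 2 2 - q 0 2 = |q 2 2 - q 0 2| := hC.symm
        _ ≤ _ := Finset.le_sup' (fun w : Fin 3 × Fin 3 × Fin 3 => |q w.1 w.2.2 - q w.2.1 w.2.2|)
            (Finset.mem_univ ((2 : Fin 3), (0 : Fin 3), (2 : Fin 3)))
  · -- θ > 1
    have hs : 0 ≤ θ ^ 2 - 1 := by nlinarith
    have t1 : 0 ≤ x ^ 2 * p₀ * (y ^ 2 * p₁) * (θ ^ 2 - 1) := by positivity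
    have t2 : 0 ≤ x ^ 2 * p₀ * p₂ * (θ ^ 2 - 1) := by positivity
    have t3 : 0 ≤ y ^ 2 * p₁ * p₂ * (θ ^ 2 - 1) := by positivity
    have hu1 : q 0 0 ≤ q 1 0 := by
      show x ^ 2 * p₀ / D₀ ≤ θ * x ^ 2 * p₀ / D₁
      rw [div_le_div_iff₀ hD₀ hD₁, hD₀def, hD₁def]
      nlinarith [t1, mul_nonneg hθ0.le t2]
    have hu2 : q 1 0 ≤ q 2 0 := by
      show θ * x ^ 2 * p₀ / D₁ ≤ θ ^ 2 * x ^ 2 * p₀ / D₂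
      rw [div_le_div_iff₀ hD₁ hD₂, hD₁def, hD₂def]
      nlinarith [mul_nonneg hθ0.le t2]
    have hv1 : q 1 2 ≤ q 0 2 := by
      show θ * p₂ / D₁ ≤ θ ^ 2 * p₂ / D₀
      rw [div_le_div_iff₀ hD₁ hD₀, hD₀def, hD₁def]
      nlinarith [mul_nonneg hθ0.le t2]
    have hv2 : q 2 2 ≤ q 1 2 := by
      show p₂ / D₂ ≤ θ * p₂ / D₁
      rw [div_le_div_iff₀ hD₂ hD₁, hD₁def, hD₂def]
      nlinarith [mul_nonneg hθ0.le t2, t3]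
    have hA : |q 0 0 - q 2 0| = q 2 0 - q 0 0 := by
      rw [abs_sub_comm]; exact abs_of_nonneg (by linarith)
    have hC : |q 2 2 - q 0 2| = q 0 2 - q 2 2 := by
      rw [abs_sub_comm]; exact abs_of_nonneg (by linarith)
    rw [hA, hC]
    have hMA : q 2 0 - q 0 0 ≤ max (q 2 0 - q 0 0) (q 0 2 - q 2 2) := le_max_left _ _
    have hMC : q 0 2 - q 2 2 ≤ max (q 2 0 - q 0 0) (q 0 2 - q 2 2) := le_max_right _ _
    refine le_antisymm (Finset.sup'_le _ _ ?_) (max_le ?_ ?_)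
    · rintro ⟨i, j, k⟩ -
      fin_cases i <;> fin_cases j <;> fin_cases k <;>
        (simp only [Fin.mk_zero, Fin.mk_one, Fin.reduceFinMk]
         rw [abs_sub_le_iff]; constructor <;> linarith)
    · calc q 2 0 - q 0 0 = |q 0 0 - q 2 0| := hA.symm
        _ ≤ _ := Finset.le_sup' (fun w : Fin 3 × Fin 3 × Fin 3 => |q w.1 w.2.2 - q w.2.1 w.2.2|)
            (Finset.mem_univ ((0 : Fin 3), (2 : Fin 3), (0 : Fin 3)))
    · calc q 0 2 - q 2 2 = |q 2 2 - q 0 2| := hC.symm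
        _ ≤ _ := Finset.le_sup' (fun w : Fin 3 × Fin 3 × Fin 3 => |q w.1 w.2.2 - q w.2.1 w.2.2|)
            (Finset.mem_univ ((2 : Fin 3), (0 : Fin 3), (2 : Fin 3)))
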